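/- Let D be an integral domain, Θ a nonempty subset of Spec(D) such that the family {D_P | P ∈ Θ} has finite character (each nonzero x ∈ K is a unit in D_P for all but finitely many P ∈ Θ), and for each P ∈ Θ let *_P be a finite type semistar operation on D_P. Then the semistar operation ∧_Θ on D defined by E^{∧_Θ} := ∩{(E D_P)^{*_P} | P ∈ Θ} is a finite type semistar operation on D. -/

import Mathlib

open Pointwise

section Preamble

variable (D : Type*) [CommRing D] [IsDomain D]
variable (K : Type*) [Field K] [Algebra D K] [IsFractionRing D K]

/-- The localization `D_P` of `D` at a prime `P`, as a subalgebra of the quotient field. -/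
noncomputable def locAt (P : Ideal D) (hP : P.IsPrime) : Subalgebra D K :=
  Localization.subalgebra K P.primeCompl
    (fun x hx => mem_nonZeroDivisors_of_ne_zero (fun h0 : x = 0 => hx (h0 ▸ P.zero_mem)))

/-- `D_P` as a `D`-submodule of the quotient field. -/
noncomputable def locAtM (P : Ideal D) (hP : P.IsPrime) : Submodule D K :=
  Subalgebra.toSubmodule (locAt D K P hP)

variable {D K}

/-- `E` is finitely generated as a module over the subring corresponding to `Rm`. -/
def IsRFG (Rm E : Submodule D K) : Prop :=
  ∃ F₀ : Submodule D K, F₀.FG ∧ F₀ ≠ ⊥ ∧ E = F₀ * Rm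

/-- `s` is a semistar operation on the subring corresponding to `Rm`
(on `D` itself when `Rm = 1`): it is defined on the nonzero `Rm`-submodules of `K`. -/
def IsSemistar (Rm : Submodule D K) (s : Submodule D K → Submodule D K) : Prop :=
  (∀ E, E ≠ ⊥ → Rm * E ≤ E → Rm * s E ≤ s E) ∧
  (∀ (x : K) (E), x ≠ 0 → E ≠ ⊥ → Rm * E ≤ E → s (x • E) = x • s E) ∧
  (∀ E F, E ≠ ⊥ → F ≠ ⊥ → Rm * E ≤ E → Rm * F ≤ F → E ≤ F → s E ≤ s F) ∧
  (∀ E, E ≠ ⊥ → Rm * E ≤ E → E ≤ s E) ∧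
  (∀ E, E ≠ ⊥ → Rm * E ≤ E → s (s E) = s E)

/-- `s` is of finite type. -/
def IsFiniteType (Rm : Submodule D K) (s : Submodule D K → Submodule D K) : Prop :=
  ∀ E, E ≠ ⊥ → Rm * E ≤ E → s E = sSup {G | ∃ F, IsRFG Rm F ∧ F ≤ E ∧ G = s F}

/-- `s` is a.b. -/
def IsAB (Rm : Submodule D K) (s : Submodule D K → Submodule D K) : Prop :=
  ∀ F G H : Submodule D K, IsRFG Rm F → G ≠ ⊥ → Rm * G ≤ G → H ≠ ⊥ → Rm * H ≤ H →
    s (F * G) ≤ s (F * H) → s G ≤ s H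

/-- `s` is e.a.b. -/
def IsEAB (Rm : Submodule D K) (s : Submodule D K → Submodule D K) : Prop :=
  ∀ F G H : Submodule D K, IsRFG Rm F → IsRFG Rm G → IsRFG Rm H →
    s (F * G) ≤ s (F * H) → s G ≤ s H

/-- `s` is stable. -/
def IsStable (Rm : Submodule D K) (s : Submodule D K → Submodule D K) : Prop :=
  ∀ E F, E ≠ ⊥ → F ≠ ⊥ → Rm * E ≤ E → Rm * F ≤ F → s (E ⊓ F) = s E ⊓ s F

/-- The divisorial closure `E ↦ (R : (R : E))` over the subring corresponding to `Rm`. -/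
def vOp (Rm E : Submodule D K) : Submodule D K := Rm / (Rm / E)

/-- The `t`-operation over the subring corresponding to `Rm`. -/
def tOp (Rm E : Submodule D K) : Submodule D K :=
  sSup {G | ∃ F, IsRFG Rm F ∧ F ≤ E ∧ G = vOp Rm F}

end Preamble

variable {D : Type*} [CommRing D] [IsDomain D]
variable {K : Type*} [Field K] [Algebra D K] [IsFractionRing D K]

section Aux
variable {D : Type*} [CommRing D] [IsDomain D]
variable {K : Type*} [Field K] [Algebra D K] [IsFractionRing D K]

lemma aux_mul_ne_bot {E F : Submodule D K} (hE : E ≠ ⊥) (hF : F ≠ ⊥) : E * F ≠ ⊥ := by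
  rw [Submodule.ne_bot_iff] at hE hF ⊢
  obtain ⟨e, he, he0⟩ := hE; obtain ⟨f, hf, hf0⟩ := hF
  exact ⟨e * f, Submodule.mul_mem_mul he hf, mul_ne_zero he0 hf0⟩

lemma aux_le_mul_right {E L : Submodule D K} (hL : (1:K) ∈ L) : E ≤ E * L := fun e he => by
  simpa using Submodule.mul_mem_mul he hL

lemma aux_exists_fg_of_mem_mul {E L : Submodule D K} {y : K} (hy : y ∈ E * L) :
    ∃ E₀ : Submodule D K, E₀.FG ∧ E₀ ≤ E ∧ y ∈ E₀ * L := by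
  refine Submodule.mul_induction_on hy ?_ ?_
  · intro e he l hl
    exact ⟨Submodule.span D {e}, Submodule.fg_span_singleton e, Submodule.span_le.2 (by simpa using he),
      Submodule.mul_mem_mul (Submodule.mem_span_singleton_self e) hl⟩
  · rintro a b ⟨Ea, hfa, hEa, ha⟩ ⟨Eb, hfb, hEb, hb⟩
    exact ⟨Ea ⊔ Eb, hfa.sup hfb, sup_le hEa hEb,
      Submodule.add_mem _ (mul_le_mul_left (le_sup_left : Ea ≤ Ea ⊔ Eb) L ha)
        (mul_le_mul_left (le_sup_right : Eb ≤ Ea ⊔ Eb) L hb)⟩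

lemma aux_exists_fg_of_fg_le_mul {E L : Submodule D K} (F₀ : Submodule D K) (hfg : F₀.FG)
    (hle : F₀ ≤ E * L) : ∃ E₀ : Submodule D K, E₀.FG ∧ E₀ ≤ E ∧ F₀ ≤ E₀ * L := by
  refine Submodule.fg_induction
    (motive := fun F₀ _ => F₀ ≤ E * L → ∃ E₀ : Submodule D K, E₀.FG ∧ E₀ ≤ E ∧ F₀ ≤ E₀ * L)
    ?_ ?_ F₀ hfg hle
  · intro x hx
    obtain ⟨E₀, h1, h2, h3⟩ := aux_exists_fg_of_mem_mul
      (hx (Submodule.mem_span_singleton_self x))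
    exact ⟨E₀, h1, h2, Submodule.span_le.2 (by simpa using h3)⟩
  · intro M₁ M₂ _ _ h1 h2 hle
    obtain ⟨E₁, ha1, ha2, ha3⟩ := h1 (le_sup_left.trans hle)
    obtain ⟨E₂, hb1, hb2, hb3⟩ := h2 (le_sup_right.trans hle)
    exact ⟨E₁ ⊔ E₂, ha1.sup hb1, sup_le ha2 hb2,
      sup_le (ha3.trans (mul_le_mul_left le_sup_left _))
        (hb3.trans (mul_le_mul_left le_sup_right _))⟩
end Aux

/-- if the family `{D_P | P ∈ Θ}` has finite character and each `*_P` is a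
finite type semistar operation on `D_P`, then `∧_Θ : E ↦ ∩ {(E D_P)^{*_P} | P ∈ Θ}` is a
finite type semistar operation on `D`. -/
theorem stmt13 (Θ : Set (PrimeSpectrum D)) (hne : Θ.Nonempty)
    (hfc : ∀ x : K, x ≠ 0 →
      {P ∈ Θ | ¬ (x ∈ locAt D K P.asIdeal P.isPrime ∧ x⁻¹ ∈ locAt D K P.asIdeal P.isPrime)}.Finite)
    (star : PrimeSpectrum D → Submodule D K → Submodule D K)
    (hsemi : ∀ P ∈ Θ, IsSemistar (locAtM D K P.asIdeal P.isPrime) (star P))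
    (hft : ∀ P ∈ Θ, IsFiniteType (locAtM D K P.asIdeal P.isPrime) (star P)) :
    IsSemistar (1 : Submodule D K)
        (fun E => ⨅ P ∈ Θ, star P (E * locAtM D K P.asIdeal P.isPrime)) ∧
      IsFiniteType (1 : Submodule D K)
        (fun E => ⨅ P ∈ Θ, star P (E * locAtM D K P.asIdeal P.isPrime)) := by
  classical
  set L : PrimeSpectrum D → Submodule D K :=
    fun P => locAtM D K P.asIdeal P.isPrime with hLdef
  have h1L : ∀ P, (1:K) ∈ L P := fun P => (locAt D K P.asIdeal P.isPrime).one_mem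
  have hLL : ∀ P, L P * L P ≤ L P := fun P =>
    Submodule.mul_le.2 fun a ha b hb => (locAt D K P.asIdeal P.isPrime).mul_mem ha hb
  have hLbot : ∀ P, L P ≠ ⊥ := fun P =>
    (Submodule.ne_bot_iff _).2 ⟨1, h1L P, one_ne_zero⟩
  set s : Submodule D K → Submodule D K :=
    fun E => ⨅ P ∈ Θ, star P (E * L P) with hsdef
  have hstab : ∀ (P) (E : Submodule D K), L P * (E * L P) ≤ E * L P := by
    intro P E
    rw [mul_left_comm]
    exact mul_le_mul_right (hLL P) _
  have hEbotmul : ∀ (P) (E : Submodule D K), E ≠ ⊥ → E * L P ≠ ⊥ := fun P E hE =>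
    aux_mul_ne_bot hE (hLbot P)
  have hles : ∀ (P) (E : Submodule D K), E ≤ E * L P := fun P E => aux_le_mul_right (h1L P)
  have hext : ∀ E : Submodule D K, E ≠ ⊥ → E ≤ s E := fun E hE =>
    le_iInf fun P => le_iInf fun hP =>
      (hles P E).trans ((hsemi P hP).2.2.2.1 _ (hEbotmul P E hE) (hstab P E))
  have hmono : ∀ E F : Submodule D K, E ≠ ⊥ → E ≤ F → s E ≤ s F := by
    intro E F hE hEF
    have hF : F ≠ ⊥ := fun h => hE (le_bot_iff.1 (h ▸ hEF))
    exact iInf₂_mono fun P hP => (hsemi P hP).2.2.1 _ _ (hEbotmul P E hE) (hEbotmul P F hF)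
      (hstab P E) (hstab P F) (mul_le_mul_left hEF _)
  have hmem : ∀ (y : K) (E : Submodule D K),
      y ∈ s E ↔ ∀ P ∈ Θ, y ∈ star P (E * L P) := by
    intro y E
    simp [hsdef, Submodule.mem_iInf]
  constructor
  · refine ⟨?_, ?_, ?_, ?_, ?_⟩
    · intro E hE _
      rw [one_mul]
    · intro x E hx hE _
      have hmul : ∀ P, (x • E) * L P = x • (E * L P) := fun P => by
        rw [← Submodule.span_singleton_mul, ← Submodule.span_singleton_mul, mul_assoc]
      have hstar : ∀ P ∈ Θ, star P ((x • E) * L P) = x • star P (E * L P) := fun P hP => by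
        rw [hmul P]
        exact (hsemi P hP).2.1 x _ hx (hEbotmul P E hE) (hstab P E)
      ext y
      rw [Submodule.mem_smul_iff_inv_mul_mem hx, hmem, hmem]
      refine forall₂_congr fun P hP => ?_
      rw [hstar P hP, Submodule.mem_smul_iff_inv_mul_mem hx]
    · intro E F hE hF _ _ hEF
      exact hmono E F hE hEF
    · intro E hE _
      exact hext E hE
    · intro E hE _
      have hsE : s E ≠ ⊥ := fun h => hE (le_bot_iff.1 (h ▸ hext E hE))
      refine le_antisymm ?_ (hext _ hsE)
      refine le_iInf fun Q => le_iInf fun hQ => ?_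
      have h1 : s (s E) ≤ star Q (s E * L Q) := iInf₂_le Q hQ
      have h2 : s E * L Q ≤ star Q (E * L Q) := by
        refine Submodule.mul_le.2 fun a ha b hb => ?_
        have ha' : a ∈ star Q (E * L Q) := (hmem a E).1 ha Q hQ
        have : b * a ∈ L Q * star Q (E * L Q) := Submodule.mul_mem_mul hb ha'
        rw [mul_comm b a] at this
        exact (hsemi Q hQ).1 _ (hEbotmul Q E hE) (hstab Q E) this
      have hsEb : s E * L Q ≠ ⊥ := aux_mul_ne_bot hsE (hLbot Q)
      have hstarb : star Q (E * L Q) ≠ ⊥ := fun h =>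
        hEbotmul Q E hE (le_bot_iff.1
          (h ▸ (hsemi Q hQ).2.2.2.1 _ (hEbotmul Q E hE) (hstab Q E)))
      have hstarstab : L Q * star Q (E * L Q) ≤ star Q (E * L Q) :=
        (hsemi Q hQ).1 _ (hEbotmul Q E hE) (hstab Q E)
      have h3 : star Q (s E * L Q) ≤ star Q (star Q (E * L Q)) :=
        (hsemi Q hQ).2.2.1 _ _ hsEb hstarb (hstab Q (s E)) hstarstab h2
      rw [(hsemi Q hQ).2.2.2.2 _ (hEbotmul Q E hE) (hstab Q E)] at h3
      exact h1.trans h3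
  · intro E hE _
    refine le_antisymm ?_ ?_
    · intro y hy
      by_cases hy0 : y = 0
      · exact hy0 ▸ Submodule.zero_mem _
      obtain ⟨e, heE, he0⟩ := (Submodule.ne_bot_iff _).1 hE
      set x : K := y * e⁻¹ with hxdef
      have hx0 : x ≠ 0 := mul_ne_zero hy0 (inv_ne_zero he0)
      have hxe : e * x = y := by
        rw [hxdef, mul_comm y, ← mul_assoc, mul_inv_cancel₀ he0, one_mul]
      set S := {P ∈ Θ | ¬ (x ∈ locAt D K P.asIdeal P.isPrime ∧
        x⁻¹ ∈ locAt D K P.asIdeal P.isPrime)} with hSdef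
      have hS : S.Finite := hfc x hx0
      rw [hmem] at hy
      -- for each P in the bad set S, find a f.g. piece using finite type
      have key : ∀ P : PrimeSpectrum D, ∃ E₀ : Submodule D K, E₀.FG ∧ E₀ ≤ E ∧
          (P ∈ S → (E₀ * L P ≠ ⊥ ∧ y ∈ star P (E₀ * L P))) := by
        intro P
        by_cases hPS : P ∈ S
        · have hPΘ : P ∈ Θ := hPS.1
          have hyP : y ∈ star P (E * L P) := hy P hPΘ
          rw [hft P hPΘ _ (hEbotmul P E hE) (hstab P E)] at hyP
          have hne : {G | ∃ F, IsRFG (L P) F ∧ F ≤ E * L P ∧ G = star P F}.Nonempty := by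
            refine ⟨star P (Submodule.span D {e} * L P), Submodule.span D {e} * L P,
              ⟨Submodule.span D {e}, Submodule.fg_span_singleton e, ?_, rfl⟩,
              mul_le_mul_left (Submodule.span_le.2 (by simpa using heE)) _, rfl⟩
            exact (Submodule.ne_bot_iff _).2 ⟨e, Submodule.mem_span_singleton_self e, he0⟩
          have hdir : DirectedOn (· ≤ ·)
              {G | ∃ F, IsRFG (L P) F ∧ F ≤ E * L P ∧ G = star P F} := by
            rintro G₁ ⟨F₁, ⟨A₁, hA₁fg, hA₁b, rfl⟩, hF₁, rfl⟩
              G₂ ⟨F₂, ⟨A₂, hA₂fg, hA₂b, rfl⟩, hF₂, rfl⟩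
            have hAb : (A₁ ⊔ A₂ : Submodule D K) ≠ ⊥ := fun h =>
              hA₁b (le_bot_iff.1 (h ▸ (le_sup_left : A₁ ≤ A₁ ⊔ A₂)))
            refine ⟨star P ((A₁ ⊔ A₂) * L P), ⟨(A₁ ⊔ A₂) * L P,
              ⟨A₁ ⊔ A₂, hA₁fg.sup hA₂fg, hAb, rfl⟩,
              by rw [Submodule.sup_mul]; exact sup_le hF₁ hF₂, rfl⟩, ?_, ?_⟩
            · exact (hsemi P hPΘ).2.2.1 _ _ (aux_mul_ne_bot hA₁b (hLbot P))
                (aux_mul_ne_bot hAb (hLbot P)) (hstab P A₁) (hstab P (A₁ ⊔ A₂))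
                (mul_le_mul_left le_sup_left _)
            · exact (hsemi P hPΘ).2.2.1 _ _ (aux_mul_ne_bot hA₂b (hLbot P))
                (aux_mul_ne_bot hAb (hLbot P)) (hstab P A₂) (hstab P (A₁ ⊔ A₂))
                (mul_le_mul_left le_sup_right _)
          obtain ⟨G, ⟨F₁, ⟨A, hAfg, hAb, rfl⟩, hFle, rfl⟩, hyG⟩ :=
            (Submodule.mem_sSup_of_directed hne hdir).1 hyP
          -- A ≤ A * L P ≤ E * L P, extract f.g. E₀ ≤ E with A ≤ E₀ * L P
          obtain ⟨E₀, hE₀fg, hE₀E, hAE₀⟩ :=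
            aux_exists_fg_of_fg_le_mul A hAfg ((hles P A).trans hFle)
          have hALE₀ : A * L P ≤ E₀ * L P :=
            (mul_le_mul_left hAE₀ _).trans
              (by rw [mul_assoc]; exact mul_le_mul_right (hLL P) _)
          have hE₀b : E₀ * L P ≠ ⊥ := fun h =>
            aux_mul_ne_bot hAb (hLbot P) (le_bot_iff.1 (h ▸ hALE₀))
          refine ⟨E₀, hE₀fg, hE₀E, fun _ => ⟨hE₀b, ?_⟩⟩
          exact (hsemi P hPΘ).2.2.1 _ _ (aux_mul_ne_bot hAb (hLbot P)) hE₀b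
            (hstab P A) (hstab P E₀) hALE₀ hyG
        · exact ⟨⊥, Submodule.fg_bot, bot_le, fun h => absurd h hPS⟩
      choose g hgfg hgE hgS using key
      set F : Submodule D K := Submodule.span D {e} ⊔ hS.toFinset.sup g with hFdef
      have hFfg : F.FG := (Submodule.fg_span_singleton e).sup
        (Submodule.fg_finset_sup _ _ fun P _ => hgfg P)
      have heF : e ∈ F := Submodule.mem_sup_left (Submodule.mem_span_singleton_self e)
      have hFb : F ≠ ⊥ := (Submodule.ne_bot_iff _).2 ⟨e, heF, he0⟩
      have hFE : F ≤ E := sup_le (Submodule.span_le.2 (by simpa using heE))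
        (Finset.sup_le fun P _ => hgE P)
      have hyF : y ∈ s F := by
        rw [hmem]
        intro P hPΘ
        by_cases hPS : P ∈ S
        · obtain ⟨hb, hy'⟩ := hgS P hPS
          have hgF : g P ≤ F :=
            le_sup_right.trans' (Finset.le_sup (hS.mem_toFinset.2 hPS))
          exact (hsemi P hPΘ).2.2.1 _ _ hb (aux_mul_ne_bot hFb (hLbot P))
            (hstab P (g P)) (hstab P F) (mul_le_mul_left hgF _) hy'
        · have hxL : x ∈ locAt D K P.asIdeal P.isPrime := by
            by_contra hxL
            exact hPS ⟨hPΘ, fun h => hxL h.1⟩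
          have : e * x ∈ F * L P := Submodule.mul_mem_mul heF hxL
          rw [hxe] at this
          exact (hsemi P hPΘ).2.2.2.1 _ (aux_mul_ne_bot hFb (hLbot P)) (hstab P F) this
      refine Submodule.mem_sSup_of_mem ?_ hyF
      exact ⟨F, ⟨F, hFfg, hFb, (mul_one F).symm⟩, hFE, rfl⟩
    · refine sSup_le ?_
      rintro G ⟨F, ⟨F₀, hfg, hF0b, rfl⟩, hFE, rfl⟩
      exact hmono _ E (by rwa [mul_one]) hFE
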